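/- Let n₁, …, n_m ≥ 1 be integers and let N = Σᵢ nᵢ. For 0 ≤ k ≤ N, let f(k) be the number of m-tuples (k₁,…,k_m) with 0 ≤ kᵢ ≤ nᵢ and Σᵢ kᵢ = k. Then f is nondecreasing on 0 ≤ k ≤ ⌊N/2⌋ and nonincreasing on ⌈N/2⌉ ≤ k ≤ N; in particular f attains its maximum at k = ⌊N/2⌋. -/

import Mathlib

open Finset

/-- `a` is symmetric about `N/2`, supported on `[0,N]`, and nondecreasing on the left half. -/
def SU (N : ℕ) (a : ℕ → ℕ) : Prop :=
  (∀ k, k ≤ N → a (N - k) = a k) ∧ (∀ k, N < k → a k = 0) ∧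
  (∀ j k, j ≤ k → 2 * k ≤ N → a j ≤ a k)

lemma SU.congr {N : ℕ} {a b : ℕ → ℕ} (hab : ∀ k, a k = b k) (h : SU N a) : SU N b := by
  obtain ⟨h1, h2, h3⟩ := h
  refine ⟨fun k hk => ?_, fun k hk => ?_, fun j k hjk hk => ?_⟩
  · rw [← hab, ← hab]; exact h1 k hk
  · rw [← hab]; exact h2 k hk
  · rw [← hab, ← hab]; exact h3 j k hjk hk

lemma SU.compare {N : ℕ} {a : ℕ → ℕ} (h : SU N a) {j k : ℕ} (hjk : j ≤ k)
    (hsum : j + k ≤ N) : a j ≤ a k := by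
  obtain ⟨hs, -, hm⟩ := h
  rcases le_or_gt (2 * k) N with h2 | h2
  · exact hm j k hjk h2
  · have hkN : k ≤ N := by omega
    calc a j ≤ a (N - k) := hm j (N - k) (by omega) (by omega)
    _ = a k := hs k hkN

lemma SU.conv {N : ℕ} {a : ℕ → ℕ} (h : SU N a) (n : ℕ) :
    SU (N + n) (fun k => ∑ j ∈ range (n + 1), if j ≤ k then a (k - j) else 0) := by
  set b : ℕ → ℕ := fun k => ∑ j ∈ range (n + 1), if j ≤ k then a (k - j) else 0 with hb
  have hsupp : ∀ k, N + n < k → b k = 0 := by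
    intro k hk
    apply Finset.sum_eq_zero
    intro j hj
    simp only [mem_range] at hj
    split
    · exact h.2.1 _ (by omega)
    · rfl
  have hsymm : ∀ k, k ≤ N + n → b (N + n - k) = b k := by
    intro k hk
    show (∑ j ∈ range (n + 1), if j ≤ N + n - k then a (N + n - k - j) else 0) = _
    rw [← Finset.sum_range_reflect]
    refine Finset.sum_congr rfl ?_
    intro j hj
    simp only [mem_range] at hj
    have hj' : j ≤ n := by omega
    have hred : n + 1 - 1 - j = n - j := by omega
    rw [hred]
    by_cases h1 : j ≤ k
    · by_cases h2 : k - j ≤ N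
      · rw [if_pos (by omega), if_pos h1]
        have he : N + n - k - (n - j) = N - (k - j) := by omega
        rw [he, h.1 (k - j) h2]
      · rw [if_neg (by omega), if_pos h1, h.2.1 _ (by omega)]
    · rw [if_pos (by omega), if_neg h1]
      exact h.2.1 _ (by omega)
  have hstep : ∀ k, 2 * (k + 1) ≤ N + n → b k ≤ b (k + 1) := by
    intro k hk
    have hb1 : b (k + 1) = (∑ j ∈ range n, if j ≤ k then a (k - j) else 0) + a (k + 1) := by
      show (∑ j ∈ range (n + 1), if j ≤ k + 1 then a (k + 1 - j) else 0) = _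
      rw [Finset.sum_range_succ']
      congr 1
      refine Finset.sum_congr rfl fun j hj => ?_
      simp only [mem_range] at hj
      by_cases h1 : j ≤ k
      · rw [if_pos (by omega), if_pos h1]
        congr 1
        omega
      · rw [if_neg (by omega), if_neg h1]
    have hb0 : b k = (∑ j ∈ range n, if j ≤ k then a (k - j) else 0) +
        (if n ≤ k then a (k - n) else 0) := by
      show (∑ j ∈ range (n + 1), if j ≤ k then a (k - j) else 0) = _
      rw [Finset.sum_range_succ]
    rw [hb0, hb1]
    apply Nat.add_le_add_left
    by_cases h1 : n ≤ k
    · rw [if_pos h1]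
      exact h.compare (by omega) (by omega)
    · rw [if_neg h1]
      exact Nat.zero_le _
  refine ⟨hsymm, hsupp, ?_⟩
  intro j k hjk hk
  induction k with
  | zero =>
    have hj0 : j = 0 := by omega
    subst hj0
    exact le_rfl
  | succ k ih =>
    rcases Nat.lt_or_ge j (k + 1) with hlt | hge
    · exact le_trans (ih (by omega) (by omega)) (hstep k hk)
    · have hjeq : j = k + 1 := by omega
      subst hjeq
      exact le_rfl

def gcount (m : ℕ) (n : Fin m → ℕ) (k : ℕ) : ℕ :=
  ((Fintype.piFinset fun i => Finset.range (n i + 1)).filter fun t => ∑ i, t i = k).card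

lemma gcount_zero (n : Fin 0 → ℕ) (k : ℕ) : gcount 0 n k = if k = 0 then 1 else 0 := by
  unfold gcount
  rcases eq_or_ne k 0 with rfl | hk
  · simp
  · rw [if_neg hk, Finset.card_eq_zero, Finset.filter_eq_empty_iff]
    intro t _
    simp only [Finset.univ_eq_empty, Finset.sum_empty]
    omega

lemma gcount_succ (m : ℕ) (n : Fin (m + 1) → ℕ) (k : ℕ) :
    gcount (m + 1) n k = ∑ j ∈ range (n (Fin.last m) + 1),
      if j ≤ k then gcount m (fun i => n i.castSucc) (k - j) else 0 := by
  unfold gcount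
  rw [Finset.card_eq_sum_card_fiberwise (f := fun t => t (Fin.last m))
    (t := range (n (Fin.last m) + 1)) ?_]
  · refine Finset.sum_congr rfl fun j hj => ?_
    simp only [mem_range] at hj
    by_cases hjk : j ≤ k
    · rw [if_pos hjk]
      apply Finset.card_nbij' (i := fun t => Fin.init t) (j := fun s => Fin.snoc s j)
      · intro t ht
        change t ∈ (_ : Finset _) at ht
        change _ ∈ (_ : Finset _)
        simp only [Finset.mem_filter, Fintype.mem_piFinset, mem_range] at ht ⊢
        obtain ⟨⟨h1, h2⟩, h3⟩ := ht
        refine ⟨fun i => h1 i.castSucc, ?_⟩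
        rw [Fin.sum_univ_castSucc] at h2
        simp only [Fin.init]
        omega
      · intro s hs
        change s ∈ (_ : Finset _) at hs
        change _ ∈ (_ : Finset _)
        simp only [Finset.mem_filter, Fintype.mem_piFinset, mem_range] at hs ⊢
        obtain ⟨h1, h2⟩ := hs
        refine ⟨⟨fun i => ?_, ?_⟩, ?_⟩
        · rcases Fin.eq_castSucc_or_eq_last i with ⟨i', rfl⟩ | rfl
          · simpa using h1 i'
          · simpa using hj
        · rw [Fin.sum_univ_castSucc]
          simp only [Fin.snoc_castSucc, Fin.snoc_last]
          omega
        · simp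
      · intro t ht
        change t ∈ (_ : Finset _) at ht
        simp only [Finset.mem_filter] at ht
        rw [← ht.2]
        exact Fin.snoc_init_self t
      · intro s hs
        simp
    · rw [if_neg hjk, Finset.card_eq_zero, Finset.filter_eq_empty_iff]
      intro t ht
      simp only [Finset.mem_filter, Fintype.mem_piFinset, mem_range] at ht
      intro hlast
      have hle : t (Fin.last m) ≤ ∑ i, t i :=
        Finset.single_le_sum (f := t) (fun i _ => Nat.zero_le _) (Finset.mem_univ _)
      omega
  · intro t ht
    change t ∈ (_ : Finset _) at ht
    simp only [Finset.mem_filter, Fintype.mem_piFinset, mem_range] at ht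
    change _ ∈ (_ : Finset _)
    simp only [mem_range]
    exact ht.1 (Fin.last m)

lemma gcount_SU : ∀ (m : ℕ) (n : Fin m → ℕ), SU (∑ i, n i) (gcount m n) := by
  intro m
  induction m with
  | zero =>
    intro n
    have h0 : (∑ i, n i) = 0 := by simp
    rw [h0]
    refine ⟨fun k hk => ?_, fun k hk => ?_, fun j k hjk hk => ?_⟩
    · interval_cases k
      norm_num
    · rw [gcount_zero, if_neg (by omega)]
    · have hj0 : j = 0 := by omega
      have hk0 : k = 0 := by omega
      subst hj0; subst hk0; exact le_rfl
  | succ m ih =>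
    intro n
    have key := (ih (fun i => n i.castSucc)).conv (n (Fin.last m))
    have hsum : ∑ i, n i = (∑ i : Fin m, n i.castSucc) + n (Fin.last m) :=
      Fin.sum_univ_castSucc n
    rw [hsum]
    exact key.congr (fun k => (gcount_succ m n k).symm)

theorem bounded_compositions_unimodal (m : ℕ) (hm : 1 ≤ m) (n : Fin m → ℕ)
    (hn : ∀ i, 1 ≤ n i) (f : ℕ → ℕ)
    (hf : ∀ k, f k = Nat.card {t : Fin m → ℕ // (∀ i, t i ≤ n i) ∧ ∑ i, t i = k}) :
    (∀ k₁ k₂, k₁ ≤ k₂ → k₂ ≤ (∑ i, n i) / 2 → f k₁ ≤ f k₂) ∧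
    (∀ k₁ k₂, ((∑ i, n i) + 1) / 2 ≤ k₁ → k₁ ≤ k₂ → k₂ ≤ ∑ i, n i → f k₂ ≤ f k₁) ∧
    (∀ k, k ≤ ∑ i, n i → f k ≤ f ((∑ i, n i) / 2)) := by
  set N := ∑ i, n i with hN
  have hfg : ∀ k, f k = gcount m n k := by
    intro k
    rw [hf k]
    unfold gcount
    rw [← Nat.card_eq_finsetCard]
    apply Nat.card_congr
    apply Equiv.subtypeEquivRight
    intro t
    simp [Fintype.mem_piFinset, Nat.lt_succ_iff]
  have hSU : SU N f := (gcount_SU m n).congr (fun k => (hfg k).symm)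
  obtain ⟨hs, hsupp, hmono⟩ := hSU
  refine ⟨?_, ?_, ?_⟩
  · intro k₁ k₂ h12 h2
    exact hmono k₁ k₂ h12 (by omega)
  · intro k₁ k₂ h1 h12 h2
    rw [← hs k₁ (by omega), ← hs k₂ (by omega)]
    exact hmono (N - k₂) (N - k₁) (by omega) (by omega)
  · intro k hk
    rcases le_or_gt (2 * k) N with h2 | h2
    · exact hmono k (N / 2) (by omega) (by omega)
    · rw [← hs k hk]
      exact hmono (N - k) (N / 2) (by omega) (by omega)
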